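/- Every inclusion ambiguity of R with respect to ≤ resolves. -/

import Mathlib

/-!
Common setting (from the paper "The Anick resolution of the co-unit of the free unitary
quantum group", arXiv:2403.06663):

`k` is a field and `n ≥ 2`.  `S` is the set of `2n²` generators `u∘_{j,i}, u•_{j,i}`,
`(j,i) ∈ {1,…,n}²`, with the involution `*` exchanging `u∘_{j,i}` and `u•_{j,i}`.
Indices are realized `0`-based as elements of `Fin n` (so the index `1` is `fin1 = 0`,
the index `n` is `finN = n-1`, and `σ(i) = n-i+1` is `Fin.rev`).
-/

namespace UnPlusAnick

/-- A generator: a color (`false` = white `∘`, `true` = black `•`) and a pair of indices. -/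
abbrev Gen (n : ℕ) := Bool × Fin n × Fin n

/-- The involution `*` on the generators: it flips the color and keeps the indices. -/
def genStar {n : ℕ} (g : Gen n) : Gen n := (!g.1, g.2)

/-- An `n × n` matrix with entries in the set of generators. -/
abbrev Mat (n : ℕ) := Fin n → Fin n → Gen n

/-- The fundamental matrix `u`, `u_{j,i} = u∘_{j,i}`. -/
def uMat (n : ℕ) : Mat n := fun j i => (false, j, i)

/-- The transpose `vᵀ`. -/
def mT {n : ℕ} (v : Mat n) : Mat n := fun j i => v i j

/-- The matrix `v^σ`, `(v^σ)_{j,i} = (v_{σ(j),σ(i)})^*`. -/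
def mS {n : ℕ} (v : Mat n) : Mat n := fun j i => genStar (v j.rev i.rev)

/-- The matrix `v^δ`, `(v^δ)_{j,i} = (v_{σ(i),σ(j)})^*`; thus `v^δ = (v^σ)ᵀ`. -/
def mD {n : ℕ} (v : Mat n) : Mat n := fun j i => genStar (v i.rev j.rev)

/-- The set `V = {u, uᵀ, u^σ, u^δ}`. -/
def V (n : ℕ) : Set (Mat n) := {uMat n, mT (uMat n), mS (uMat n), mD (uMat n)}

/-- The index `1` of `{1, …, n}`, as the `0`-based element `0` of `Fin n`. -/
def fin1 (n : ℕ) (hn : 2 ≤ n) : Fin n := ⟨0, by omega⟩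

/-- The index `n` of `{1, …, n}`, as the `0`-based element `n - 1` of `Fin n`. -/
def finN (n : ℕ) (hn : 2 ≤ n) : Fin n := ⟨n - 1, by omega⟩

theorem genStar_genStar {n : ℕ} (g : Gen n) : genStar (genStar g) = g := by simp [genStar]

theorem mS_mS {n : ℕ} (v : Mat n) : mS (mS v) = v := by
  funext j i; simp [mS, genStar_genStar]

theorem mD_mD {n : ℕ} (v : Mat n) : mD (mD v) = v := by
  funext j i; simp [mD, genStar_genStar]

theorem mS_mD {n : ℕ} (v : Mat n) : mS (mD v) = mT v := by
  funext j i; simp [mS, mD, mT, genStar_genStar]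

theorem mD_mS {n : ℕ} (v : Mat n) : mD (mS v) = mT v := by
  funext j i; simp [mS, mD, mT, genStar_genStar]

/-- `V` is closed under transposition. -/
theorem V_mT {n : ℕ} {v : Mat n} (hv : v ∈ V n) : mT v ∈ V n := by
  simp only [V, Set.mem_insert_iff, Set.mem_singleton_iff] at hv ⊢
  rcases hv with rfl | rfl | rfl | rfl
  · exact Or.inr (Or.inl rfl)
  · exact Or.inl rfl
  · exact Or.inr (Or.inr (Or.inr rfl))
  · exact Or.inr (Or.inr (Or.inl rfl))

/-- `V` is closed under `v ↦ v^σ`. -/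
theorem V_mS {n : ℕ} {v : Mat n} (hv : v ∈ V n) : mS v ∈ V n := by
  simp only [V, Set.mem_insert_iff, Set.mem_singleton_iff] at hv ⊢
  rcases hv with rfl | rfl | rfl | rfl
  · exact Or.inr (Or.inr (Or.inl rfl))
  · exact Or.inr (Or.inr (Or.inr rfl))
  · exact Or.inl (mS_mS _)
  · exact Or.inr (Or.inl (mS_mD _))

/-- `V` is closed under `v ↦ v^δ`. -/
theorem V_mD {n : ℕ} {v : Mat n} (hv : v ∈ V n) : mD v ∈ V n := by
  simp only [V, Set.mem_insert_iff, Set.mem_singleton_iff] at hv ⊢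
  rcases hv with rfl | rfl | rfl | rfl
  · exact Or.inr (Or.inr (Or.inr rfl))
  · exact Or.inr (Or.inr (Or.inl rfl))
  · exact Or.inr (Or.inl (mD_mS _))
  · exact Or.inl (mD_mD _)

/-! ### Words and the free algebra -/

/-- Words in the generators: the free monoid over the set of generators. -/
abbrev Word (n : ℕ) := FreeMonoid (Gen n)

/-- The free unital associative `k`-algebra on the generators, realized as the monoid algebra
of the free monoid of words; its canonical `k`-basis is the set of words. -/
abbrev FreeAlg (k : Type*) [Field k] (n : ℕ) := MonoidAlgebra k (Word n)

/-- A word, viewed as a monomial in the free algebra. -/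
noncomputable def wd (k : Type*) [Field k] {n : ℕ} (w : Word n) : FreeAlg k n :=
  MonoidAlgebra.of k (Word n) w

/-- The relation `b^v_{j,i} = ∑_{s=1}^{n} v_{j,σ(s)} (v^δ)_{s,σ(i)} − δ_{j,i} · 1`. -/
noncomputable def brel (k : Type*) [Field k] {n : ℕ} (v : Mat n) (j i : Fin n) : FreeAlg k n :=
  (∑ s : Fin n, wd k (FreeMonoid.of (v j s.rev) * FreeMonoid.of (mD v s i.rev)))
    - if j = i then 1 else 0

/-- The set of relations `R = {b^v_{j,i} : v ∈ V, (j,i) ∈ {1,…,n}²}`. -/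
def rels (k : Type*) [Field k] (n : ℕ) : Set (FreeAlg k n) :=
  {x | ∃ v ∈ V n, ∃ j i : Fin n, x = brel k v j i}

/-- `b̃^v = v_{n,n}(v^δ)_{1,1} − ∑_{s=2}^{n} ∑_{t=1}^{n−1} v_{t,σ(s)}(v^δ)_{s,σ(t)} + (n−2)·1`. -/
noncomputable def btil (k : Type*) [Field k] (n : ℕ) (hn : 2 ≤ n) (v : Mat n) : FreeAlg k n :=
  wd k (FreeMonoid.of (v (finN n hn) (finN n hn)) * FreeMonoid.of (mD v (fin1 n hn) (fin1 n hn)))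
    - (∑ s ∈ Finset.univ.filter (fun s : Fin n => s ≠ fin1 n hn),
        ∑ t ∈ Finset.univ.filter (fun t : Fin n => t ≠ finN n hn),
          wd k (FreeMonoid.of (v t s.rev) * FreeMonoid.of (mD v s t.rev)))
    + ((n - 2 : ℕ) : FreeAlg k n)

/-! ### The monomial order and tips -/

/-- The strict order on the generators: every black generator is smaller than every white one;
`u•_{t,s} < u•_{j,i}` iff `(j,i) <` `(t,s)` lexicographically, and `u∘_{t,s} < u∘_{j,i}` iff
`(t,s) < (j,i)` lexicographically. -/
def genLT {n : ℕ} (g h : Gen n) : Prop :=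
  (g.1 = true ∧ h.1 = false) ∨
    (g.1 = true ∧ h.1 = true ∧ toLex h.2 < toLex g.2) ∨
    (g.1 = false ∧ h.1 = false ∧ toLex g.2 < toLex h.2)

/-- The degreewise lexicographic extension of the order on generators to words:
`w ≤ w'` iff `w = w'`, or `w` is shorter than `w'`, or they have the same length and `w`
precedes `w'` lexicographically letter by letter. -/
def wordLE {n : ℕ} (w w' : Word n) : Prop :=
  w = w' ∨ (FreeMonoid.toList w).length < (FreeMonoid.toList w').length ∨
    ((FreeMonoid.toList w).length = (FreeMonoid.toList w').length ∧
      List.Lex genLT (FreeMonoid.toList w) (FreeMonoid.toList w'))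

/-- `IsTip f t`: the word `t` is the `≤`-largest word occurring with nonzero coefficient in
`f`, i.e. `Tip(f) = t`. -/
def IsTip (k : Type*) [Field k] {n : ℕ} (f : FreeAlg k n) (t : Word n) : Prop :=
  f.coeff t ≠ 0 ∧ ∀ w : Word n, f.coeff w ≠ 0 → wordLE w t

/-- `w` divides `w'` (as words in the free monoid). -/
def WDvd {n : ℕ} (w w' : Word n) : Prop := ∃ w₁ w₂ : Word n, w' = w₁ * w * w₂

/-! ### The ideal of relations -/

/-- The two-sided ideal `I` of the free algebra generated by the set of relations `R`. -/
noncomputable def idl (k : Type*) [Field k] (n : ℕ) : TwoSidedIdeal (FreeAlg k n) :=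
  TwoSidedIdeal.span (rels k n)

/-- The set `Tip(I)` of tips of nonzero elements of `I`. -/
def TipSet (k : Type*) [Field k] (n : ℕ) : Set (Word n) :=
  {w | ∃ f : FreeAlg k n, f ∈ idl k n ∧ f ≠ 0 ∧ IsTip k f w}

/-! ### Reductions and ambiguities -/

/-- `φ` is a one-step reduction by `f`: there are fixed words `w₁`, `w₂` such that `φ` maps the
word `w₁ Tip(f) w₂` to `w₁ (Tip(f) − c⁻¹ f) w₂`, where `c` is the leading coefficient of `f`,
and fixes every other word. -/
def IsOneStep (k : Type*) [Field k] {n : ℕ} (f : FreeAlg k n)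
    (φ : FreeAlg k n →ₗ[k] FreeAlg k n) : Prop :=
  f ≠ 0 ∧ ∃ (w₁ w₂ t : Word n), IsTip k f t ∧
    φ (wd k (w₁ * t * w₂)) = wd k w₁ * (wd k t - (f.coeff t)⁻¹ • f) * wd k w₂ ∧
    ∀ w : Word n, w ≠ w₁ * t * w₂ → φ (wd k w) = wd k w

/-- A reduction by a set `G`: a finite composition of one-step reductions by nonzero elements
of `G`. -/
inductive IsReduction (k : Type*) [Field k] {n : ℕ} (G : Set (FreeAlg k n)) :
    (FreeAlg k n →ₗ[k] FreeAlg k n) → Prop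
  | id : IsReduction k G LinearMap.id
  | comp {φ ψ : FreeAlg k n →ₗ[k] FreeAlg k n} {g : FreeAlg k n} (hg : g ∈ G)
      (hφ : IsOneStep k g φ) (hψ : IsReduction k G ψ) : IsReduction k G (φ ∘ₗ ψ)

/-- `(g, g', w₁, w₂)` is an inclusion ambiguity of `G`. -/
def IsInclusionAmbiguity (k : Type*) [Field k] {n : ℕ} (G : Set (FreeAlg k n))
    (g g' : FreeAlg k n) (w₁ w₂ : Word n) : Prop :=
  g ∈ G ∧ g' ∈ G ∧ g ≠ 0 ∧ g' ≠ 0 ∧ g ≠ g' ∧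
    ∃ t t' : Word n, IsTip k g t ∧ IsTip k g' t' ∧ w₁ * t * w₂ = t'

/-- The inclusion ambiguity `(g, g', w₁, w₂)` of `G` resolves. -/
def InclusionAmbiguityResolves (k : Type*) [Field k] {n : ℕ} (G : Set (FreeAlg k n))
    (g g' : FreeAlg k n) (w₁ w₂ : Word n) : Prop :=
  ∀ t t' : Word n, IsTip k g t → IsTip k g' t' →
    ∃ φ₁ φ₂ : FreeAlg k n →ₗ[k] FreeAlg k n, IsReduction k G φ₁ ∧ IsReduction k G φ₂ ∧
      φ₁ (wd k t' - (g'.coeff t')⁻¹ • g') = φ₂ (wd k w₁ * (wd k t - (g.coeff t)⁻¹ • g) * wd k w₂)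

/-- `(g₁, g₂, w₁, w₂)` is an overlap ambiguity of `G`. -/
def IsOverlapAmbiguity (k : Type*) [Field k] {n : ℕ} (G : Set (FreeAlg k n))
    (g₁ g₂ : FreeAlg k n) (w₁ w₂ : Word n) : Prop :=
  g₁ ∈ G ∧ g₂ ∈ G ∧ g₁ ≠ 0 ∧ g₂ ≠ 0 ∧ ¬(w₁ = 1 ∧ w₂ = 1) ∧
    ∃ t₁ t₂ : Word n, IsTip k g₁ t₁ ∧ IsTip k g₂ t₂ ∧ t₁ * w₂ = w₁ * t₂ ∧
      ¬WDvd t₂ w₂ ∧ ¬WDvd t₁ w₁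

/-- The overlap ambiguity `(g₁, g₂, w₁, w₂)` of `G` resolves. -/
def OverlapAmbiguityResolves (k : Type*) [Field k] {n : ℕ} (G : Set (FreeAlg k n))
    (g₁ g₂ : FreeAlg k n) (w₁ w₂ : Word n) : Prop :=
  ∀ t₁ t₂ : Word n, IsTip k g₁ t₁ → IsTip k g₂ t₂ →
    ∃ φ₁ φ₂ : FreeAlg k n →ₗ[k] FreeAlg k n, IsReduction k G φ₁ ∧ IsReduction k G φ₂ ∧
      φ₁ ((wd k t₁ - (g₁.coeff t₁)⁻¹ • g₁) * wd k w₂) = φ₂ (wd k w₁ * (wd k t₂ - (g₂.coeff t₂)⁻¹ • g₂))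

/-! ### Gröbner bases -/

/-- `G` is a Gröbner basis of the two-sided ideal `J` with respect to the order: `G ⊆ J` and
the tip of every nonzero element of `J` is divisible by the tip of some nonzero element
of `G`. -/
def IsGroebner (k : Type*) [Field k] {n : ℕ} (G : Set (FreeAlg k n))
    (J : TwoSidedIdeal (FreeAlg k n)) : Prop :=
  (∀ g ∈ G, g ∈ J) ∧
    ∀ f : FreeAlg k n, f ∈ J → f ≠ 0 → ∀ t : Word n, IsTip k f t →
      ∃ g ∈ G, g ≠ 0 ∧ ∃ tg : Word n, IsTip k g tg ∧ WDvd tg t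

/-- A minimal Gröbner basis: `0 ∉ G` and the tip of no element of `G` divides the tip of a
different element of `G`. -/
def IsMinimalGroebner (k : Type*) [Field k] {n : ℕ} (G : Set (FreeAlg k n))
    (J : TwoSidedIdeal (FreeAlg k n)) : Prop :=
  IsGroebner k G J ∧ (0 : FreeAlg k n) ∉ G ∧
    ∀ g ∈ G, ∀ g' ∈ G, g ≠ g' → ∀ t t' : Word n, IsTip k g t → IsTip k g' t' → ¬WDvd t t'

/-- A reduced Gröbner basis: minimal, every element has leading coefficient `1`, and the tip of
no element of `G` divides a word occurring with nonzero coefficient in a different element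
of `G`. -/
def IsReducedGroebner (k : Type*) [Field k] {n : ℕ} (G : Set (FreeAlg k n))
    (J : TwoSidedIdeal (FreeAlg k n)) : Prop :=
  IsMinimalGroebner k G J ∧ (∀ g ∈ G, ∀ t : Word n, IsTip k g t → g.coeff t = 1) ∧
    ∀ g ∈ G, ∀ g' ∈ G, g ≠ g' → ∀ t : Word n, IsTip k g t →
      ∀ w : Word n, g'.coeff w ≠ 0 → ¬WDvd t w

/-! ### Monoidal ideals -/

/-- A monoidal ideal of the free monoid of words: a set of words containing all multiples of
its elements. -/
def IsMonIdeal {n : ℕ} (M : Set (Word n)) : Prop :=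
  ∀ w ∈ M, ∀ w₁ w₂ : Word n, w₁ * w * w₂ ∈ M

/-- `N` generates `M` as a monoidal ideal: `M` is the smallest monoidal ideal containing `N`. -/
def GeneratesMonIdeal {n : ℕ} (N M : Set (Word n)) : Prop :=
  IsMonIdeal M ∧ N ⊆ M ∧ ∀ M' : Set (Word n), IsMonIdeal M' → N ⊆ M' → M ⊆ M'

/-! ### Chain words -/

/-- `v^{[ℓ]}`: equal to `v` for odd `ℓ` and to `v^δ` for even `ℓ`. -/
def pw {n : ℕ} (l : ℕ) (v : Mat n) : Mat n := if l % 2 = 1 then v else mD v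

/-- The word `v^{(ℓ)}_{j,i}` (for `ℓ ≥ 1`). -/
def chainWord (n : ℕ) (hn : 2 ≤ n) (v : Mat n) (l : ℕ) (j i : Fin n) : Word n :=
  if l = 1 then FreeMonoid.of (v j i.rev)
  else if l % 2 = 0 then
    FreeMonoid.of (v j (finN n hn)) *
      (FreeMonoid.of (mD v (fin1 n hn) (finN n hn)) *
          FreeMonoid.of (v (fin1 n hn) (finN n hn))) ^ ((l - 2) / 2) *
      FreeMonoid.of (mD v (fin1 n hn) i.rev)
  else
    FreeMonoid.of (v j (finN n hn)) *
      (FreeMonoid.of (mD v (fin1 n hn) (finN n hn)) *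
          FreeMonoid.of (v (fin1 n hn) (finN n hn))) ^ ((l - 3) / 2) *
      FreeMonoid.of (mD v (fin1 n hn) (finN n hn)) * FreeMonoid.of (v (fin1 n hn) i.rev)

/-- The set `C_ℓ = {v^{(ℓ)}_{j,i} : v ∈ V, (j,i) ∈ {1,…,n}²}` of `ℓ`-chains. -/
def Cset (n : ℕ) (hn : 2 ≤ n) (l : ℕ) : Set (Word n) :=
  {w | ∃ v ∈ V n, ∃ j i : Fin n, w = chainWord n hn v l j i}

/-! ### The quotient algebra `A = F/I`, the counit and the modules of the resolution -/

/-- The relation identifying each element of `R` with `0`; the induced ring congruence realizes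
the quotient `A = F/I` by the two-sided ideal `I` generated by `R`. -/
def relR (k : Type*) [Field k] (n : ℕ) : FreeAlg k n → FreeAlg k n → Prop :=
  fun a b => a ∈ rels k n ∧ b = 0

/-- The `k`-algebra `A = F/I`. -/
abbrev Aq (k : Type*) [Field k] (n : ℕ) := RingQuot (relR k n)

/-- The quotient map `F → A = F/I`. -/
noncomputable def pr (k : Type*) [Field k] (n : ℕ) : FreeAlg k n →ₐ[k] Aq k n :=
  RingQuot.mkAlgHom k (relR k n)

/-- The class `v_{j,i} + I ∈ A` of a generator. -/
noncomputable def gen (k : Type*) [Field k] {n : ℕ} (v : Mat n) (j i : Fin n) : Aq k n :=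
  pr k n (wd k (FreeMonoid.of (v j i)))

/-- The ring homomorphism `Aᵐᵒᵖ →+* k` induced by `ε` (using the commutativity of `k`). -/
noncomputable def epsOp (k : Type*) [Field k] (n : ℕ) (ε : Aq k n →ₐ[k] k) :
    (Aq k n)ᵐᵒᵖ →+* k where
  toFun a := ε a.unop
  map_one' := by simp
  map_mul' a b := by simp [mul_comm]
  map_zero' := by simp
  map_add' a b := by simp

/-- The right `A`-module `k_ε`: the field `k` with the right `A`-action induced by `ε`,
realized as a left module over the opposite algebra `Aᵐᵒᵖ`. -/
def KE (k : Type*) [Field k] (n : ℕ) (_ε : Aq k n →ₐ[k] k) : Type _ := k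

instance (k : Type*) [Field k] (n : ℕ) (ε : Aq k n →ₐ[k] k) : AddCommGroup (KE k n ε) :=
  inferInstanceAs (AddCommGroup k)

instance (k : Type*) [Field k] (n : ℕ) (ε : Aq k n →ₐ[k] k) : Module k (KE k n ε) :=
  inferInstanceAs (Module k k)

instance (k : Type*) [Field k] (n : ℕ) (ε : Aq k n →ₐ[k] k) : One (KE k n ε) := ⟨(1 : k)⟩

noncomputable instance (k : Type*) [Field k] (n : ℕ) (ε : Aq k n →ₐ[k] k) :
    Module ((Aq k n)ᵐᵒᵖ) (KE k n ε) :=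
  Module.compHom k (epsOp k n ε)

instance (k : Type*) [Field k] (n : ℕ) (ε : Aq k n →ₐ[k] k) :
    SMulCommClass ((Aq k n)ᵐᵒᵖ) k (KE k n ε) :=
  ⟨fun a c x => by
    show epsOp k n ε a • (c • x) = c • (epsOp k n ε a • x)
    rw [smul_smul, smul_smul, mul_comm]⟩

/-- The free right `A`-module `P_ℓ = kC_ℓ ⊗ₖ A` with basis `C_ℓ` (for `ℓ ≥ 1`), realized as a
left module over the opposite algebra `Aᵐᵒᵖ`. -/
abbrev Pmod (k : Type*) [Field k] (n : ℕ) (hn : 2 ≤ n) (l : ℕ) :=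
  ↥(Cset n hn l) →₀ Aq k n

/-- The element `v^{(ℓ)}_{j,i} ⊗ a` of `P_ℓ`. -/
noncomputable def bas (k : Type*) [Field k] (n : ℕ) (hn : 2 ≤ n) (l : ℕ) (v : Mat n)
    (hv : v ∈ V n) (j i : Fin n) (a : Aq k n) : Pmod k n hn l :=
  Finsupp.single ⟨chainWord n hn v l j i, ⟨v, hv, j, i, rfl⟩⟩ a

/-- Pre-composition with a homomorphism of right `A`-modules, as the `k`-linear map
`Hom_A(N, k_ε) → Hom_A(M, k_ε)`, `g ↦ g ∘ d`. -/
noncomputable def homMap (k : Type*) [Field k] {n : ℕ} (ε : Aq k n →ₐ[k] k) {M N : Type*}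
    [AddCommMonoid M] [AddCommMonoid N] [Module ((Aq k n)ᵐᵒᵖ) M] [Module ((Aq k n)ᵐᵒᵖ) N]
    (d : M →ₗ[(Aq k n)ᵐᵒᵖ] N) :
    (N →ₗ[(Aq k n)ᵐᵒᵖ] KE k n ε) →ₗ[k] (M →ₗ[(Aq k n)ᵐᵒᵖ] KE k n ε) where
  toFun g := g.comp d
  map_add' _ _ := LinearMap.ext fun _ => rfl
  map_smul' _ _ := LinearMap.ext fun _ => rfl

/-- The right-hand side of the defining formula for `d₂` on the basis element
`v^{(2)}_{j,i} ⊗ 1`. -/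
noncomputable def d2RHS (k : Type*) [Field k] (n : ℕ) (hn : 2 ≤ n) (v : Mat n)
    (hv : v ∈ V n) (j i : Fin n) : Pmod k n hn 1 :=
  (∑ s : Fin n, bas k n hn 1 v hv j s (gen k (mD v) s i.rev))
    + bas k n hn 1 (mD v) (V_mD hv) j.rev i 1
    - (if j = finN n hn ∧ i = finN n hn then
        ∑ s ∈ Finset.univ.filter (fun s : Fin n => s ≠ fin1 n hn),
          ((∑ t : Fin n, bas k n hn 1 v hv t s (gen k (mD v) s t.rev))
            + bas k n hn 1 (mD v) (V_mD hv) s s.rev 1)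
      else 0)

/-- The right-hand side of the defining formula for `d_ℓ`, `ℓ ≥ 3`, on the basis element
`v^{(ℓ)}_{j,i} ⊗ 1`. -/
noncomputable def dTail (k : Type*) [Field k] (n : ℕ) (hn : 2 ≤ n) (l : ℕ) (v : Mat n)
    (hv : v ∈ V n) (j i : Fin n) : Pmod k n hn (l - 1) :=
  (∑ s : Fin n, bas k n hn (l - 1) v hv j s (gen k (pw l v) s i.rev))
    + bas k n hn (l - 1) (mD v) (V_mD hv) j.rev i ((-1 : Aq k n) ^ l)
    + (if j = finN n hn then
        ((bas k n hn (l - 1) (mT v) (V_mT hv) (fin1 n hn) (fin1 n hn)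
              (gen k (pw l (mT v)) i.rev (finN n hn))
            + (if l = 3 then
                ∑ s ∈ Finset.univ.filter (fun s : Fin n => s ≠ fin1 n hn ∧ s ≠ finN n hn),
                  bas k n hn (l - 1) (mT v) (V_mT hv) s s (gen k (pw l (mT v)) i.rev (finN n hn))
              else 0))
          - (if i = finN n hn then
              (∑ s : Fin n, bas k n hn (l - 1) (mT v) (V_mT hv) (fin1 n hn) s
                  (gen k (pw l (mT v)) s (finN n hn)))
                + bas k n hn (l - 1) (mS v) (V_mS hv) (finN n hn) (fin1 n hn) ((-1 : Aq k n) ^ l)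
            else 0))
      else 0)
    + (if j = fin1 n hn ∧ i = finN n hn then
        bas k n hn (l - 1) (mS v) (V_mS hv) (fin1 n hn) (fin1 n hn) ((-1 : Aq k n) ^ l)
          + (if l = 3 then
              ∑ s ∈ Finset.univ.filter (fun s : Fin n => s ≠ fin1 n hn ∧ s ≠ finN n hn),
                bas k n hn (l - 1) (mS v) (V_mS hv) s s ((-1 : Aq k n) ^ l)
            else 0)
      else 0)

/-- The system of identities from STATEMENT 14, for a fixed `v ∈ V`. -/
noncomputable def cond14 (k : Type*) [Field k] {n : ℕ} (hn : 2 ≤ n) (ε : Aq k n →ₐ[k] k)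
    (g : Pmod k n hn 1 →ₗ[(Aq k n)ᵐᵒᵖ] KE k n ε) (v : Mat n) (hv : v ∈ V n) : Prop :=
  ∀ j i : Fin n, g (bas k n hn 1 (mS v) (V_mS hv) j i 1) = -g (bas k n hn 1 v hv i j 1)

/-- The system of identities (1)–(4) from STATEMENT 16, for a fixed `v ∈ V`. -/
noncomputable def cond16 (k : Type*) [Field k] {n : ℕ} (hn : 2 ≤ n) (ε : Aq k n →ₐ[k] k)
    (l : ℕ) (g : Pmod k n hn (l - 1) →ₗ[(Aq k n)ᵐᵒᵖ] KE k n ε) (v : Mat n)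
    (hv : v ∈ V n) : Prop :=
  (∀ j i : Fin n, (j, i) ≠ (fin1 n hn, fin1 n hn) →
      g (bas k n hn (l - 1) (mT v) (V_mT hv) j i 1) =
        -(((-1 : k) ^ l) • g (bas k n hn (l - 1) (mS v) (V_mS hv) j.rev i.rev 1))
          - (if j = finN n hn ∧ i = finN n hn then
              g (bas k n hn (l - 1) v hv (fin1 n hn) (fin1 n hn) 1)
                + (if l = 3 then
                    ∑ s ∈ Finset.univ.filter (fun s : Fin n => s ≠ fin1 n hn ∧ s ≠ finN n hn),
                      g (bas k n hn (l - 1) v hv s s 1)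
                  else 0)
            else 0)) ∧
  (∀ j i : Fin n, (j, i) ≠ (fin1 n hn, fin1 n hn) →
      g (bas k n hn (l - 1) (mD v) (V_mD hv) j i 1) =
        -(((-1 : k) ^ l) • g (bas k n hn (l - 1) v hv j.rev i.rev 1))
          - (if j = finN n hn ∧ i = finN n hn then
              g (bas k n hn (l - 1) (mS v) (V_mS hv) (fin1 n hn) (fin1 n hn) 1)
                + (if l = 3 then
                    ∑ s ∈ Finset.univ.filter (fun s : Fin n => s ≠ fin1 n hn ∧ s ≠ finN n hn),
                      g (bas k n hn (l - 1) (mS v) (V_mS hv) s s 1)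
                  else 0)
            else 0)) ∧
  (g (bas k n hn (l - 1) (mD v) (V_mD hv) (fin1 n hn) (fin1 n hn) 1) =
      -(((-1 : k) ^ l) • g (bas k n hn (l - 1) (mT v) (V_mT hv) (fin1 n hn) (fin1 n hn) 1))
        - ((-1 : k) ^ l) • g (bas k n hn (l - 1) v hv (finN n hn) (finN n hn) 1)
        + (if l = 3 then
            ∑ s ∈ Finset.univ.filter (fun s : Fin n => s ≠ fin1 n hn ∧ s ≠ finN n hn),
              g (bas k n hn (l - 1) (mS v) (V_mS hv) s s 1)
          else 0)) ∧
  (g (bas k n hn (l - 1) (mS v) (V_mS hv) (finN n hn) (finN n hn) 1) =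
      -(if l = 3 then
          ∑ s ∈ Finset.univ.filter (fun s : Fin n => s ≠ fin1 n hn ∧ s ≠ finN n hn),
            g (bas k n hn (l - 1) (mS v) (V_mS hv) s s 1)
        else 0)
        + ((-1 : k) ^ l) • (g (bas k n hn (l - 1) v hv (finN n hn) (finN n hn) 1)
            + (if l = 3 then
                ∑ s ∈ Finset.univ.filter (fun s : Fin n => s ≠ fin1 n hn ∧ s ≠ finN n hn),
                  g (bas k n hn (l - 1) v hv s s 1)
              else 0)))


/-! Auxiliary development for statement 3. -/

section Aux

variable {k : Type*} [Field k] {n : ℕ}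

open scoped Classical

/-- The `s`-th word of the relation `b^v_{j,i}`. -/
def wrd (v : Mat n) (s j i : Fin n) : Word n :=
  FreeMonoid.of (v j s.rev) * FreeMonoid.of (mD v s i.rev)

theorem mD_apply_rev (v : Mat n) (s i : Fin n) :
    mD v s i.rev = genStar (v i s.rev) := by
  simp [mD, Fin.rev_rev]

theorem genStar_inj {a b : Gen n} (h : genStar a = genStar b) : a = b := by
  have := congrArg genStar h
  rwa [genStar_genStar, genStar_genStar] at this

theorem pair_eq {a b a' b' : Gen n} :
    (FreeMonoid.of a * FreeMonoid.of b = FreeMonoid.of a' * FreeMonoid.of b') ↔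
      a = a' ∧ b = b' := by
  constructor
  · intro h
    have := congrArg FreeMonoid.toList h
    simpa using this
  · rintro ⟨rfl, rfl⟩; rfl

theorem wrd_eq_iff {v v' : Mat n} {s j i s' j' i' : Fin n} :
    wrd v s j i = wrd v' s' j' i' ↔
      v j s.rev = v' j' s'.rev ∧ genStar (v i s.rev) = genStar (v' i' s'.rev) := by
  rw [wrd, wrd, pair_eq, mD_apply_rev, mD_apply_rev]

theorem wrd_ne_one (v : Mat n) (s j i : Fin n) : wrd v s j i ≠ 1 := by
  intro h
  have := congrArg FreeMonoid.toList h
  simp [wrd] at this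

theorem V_inj {v : Mat n} (hv : v ∈ V n) {j i j' i' : Fin n}
    (h : v j i = v j' i') : j = j' ∧ i = i' := by
  rcases hv with rfl | rfl | rfl | rfl <;>
    simp only [uMat, mT, mS, mD, genStar, Prod.mk.injEq, Fin.rev_inj] at h <;> tauto

theorem mT_mT (v : Mat n) : mT (mT v) = v := rfl

theorem wrd_mT (v : Mat n) (a b : Fin n) :
    wrd v b a.rev a.rev = wrd (mT v) a b.rev b.rev := by
  simp [wrd, mD, mT, Fin.rev_rev]

/-! coefficients -/

theorem brel_apply (v : Mat n) (j i : Fin n) (w : Word n) :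
    (brel k v j i).coeff w = (∑ s : Fin n, if wrd v s j i = w then (1 : k) else 0)
      - (if j = i then (if (1 : Word n) = w then (1 : k) else 0) else 0) := by
  have h1 : ((∑ s : Fin n, wd k (wrd v s j i)) : FreeAlg k n).coeff w
      = ∑ s : Fin n, if wrd v s j i = w then (1 : k) else 0 := by
    rw [MonoidAlgebra.coeff_sum, Finset.sum_apply']
    exact Finset.sum_congr rfl fun s _ => by
      rw [wd, MonoidAlgebra.of_apply, MonoidAlgebra.coeff_single, Finsupp.single_apply]
  have h2 : ((if j = i then 1 else 0 : FreeAlg k n)).coeff w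
      = (if j = i then (if (1 : Word n) = w then (1 : k) else 0) else 0) := by
    split
    · rw [MonoidAlgebra.one_def, MonoidAlgebra.coeff_single, Finsupp.single_apply]
    · simp
  rw [brel, MonoidAlgebra.coeff_sub, Finsupp.sub_apply]
  simp only [wrd] at h1
  rw [h1, h2]
  simp only [wrd]


theorem brel_apply_ne (v : Mat n) (j i : Fin n) {w : Word n} (h1 : w ≠ 1)
    (h2 : ∀ s : Fin n, w ≠ wrd v s j i) : (brel k v j i).coeff w = 0 := by
  rw [brel_apply]
  rw [Finset.sum_eq_zero (fun s _ => if_neg (fun h => h2 s h.symm))]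
  simp [Ne.symm h1]

theorem wrd_inj_s {v : Mat n} (hv : v ∈ V n) {j i j' i' s s' : Fin n}
    (h : wrd v s j i = wrd v s' j' i') : s = s' ∧ j = j' ∧ i = i' := by
  rw [wrd_eq_iff] at h
  obtain ⟨hj, hsr⟩ := V_inj hv h.1
  obtain ⟨hi, -⟩ := V_inj hv (genStar_inj h.2)
  exact ⟨Fin.rev_inj.mp hsr, hj, hi⟩

theorem brel_coeff (hv : v ∈ V n) (s j i : Fin n) :
    (brel k v j i).coeff (wrd v s j i) = 1 := by
  rw [brel_apply]
  rw [Finset.sum_eq_single s]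
  · simp [(wrd_ne_one v s j i).symm]
  · intro s' _ hs'
    exact if_neg (fun h => hs' (wrd_inj_s hv h).1)
  · simp

theorem brel_ne_zero (hv : v ∈ V n) (j i : Fin n) : brel k v j i ≠ 0 := fun h => by
  have h1 := brel_coeff (k := k) hv j j i
  rw [h] at h1
  simp at h1


theorem genLT_asymm {g h : Gen n} (h1 : genLT g h) (h2 : genLT h g) : False := by
  rcases h1 with ⟨e1, e2⟩ | ⟨e1, e2, e3⟩ | ⟨e1, e2, e3⟩ <;>
    rcases h2 with ⟨f1, f2⟩ | ⟨f1, f2, f3⟩ | ⟨f1, f2, f3⟩ <;>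
      simp_all <;> exact absurd f3 (lt_asymm e3)

theorem lex_asymm : ∀ {l₁ l₂ : List (Gen n)},
    List.Lex genLT l₁ l₂ → List.Lex genLT l₂ l₁ → False := by
  intro l₁ l₂ h1
  induction h1 with
  | nil => intro h2; cases h2
  | cons h ih =>
      intro h2
      cases h2 with
      | cons h' => exact ih h'
      | rel h' => exact genLT_asymm h' h'
  | rel h =>
      intro h2
      cases h2 with
      | cons h' => exact genLT_asymm h h
      | rel h' => exact genLT_asymm h h'

theorem wordLE_antisymm {w w' : Word n} (h1 : wordLE w w') (h2 : wordLE w' w) : w = w' := by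
  rcases h1 with rfl | h1 | ⟨hl1, h1⟩
  · rfl
  all_goals rcases h2 with rfl | h2 | ⟨hl2, h2⟩
  · rfl
  · omega
  · omega
  · rfl
  · omega
  · exact absurd h2 (fun h => lex_asymm h1 h)

theorem isTip_unique {f : FreeAlg k n} {t t' : Word n} (h : IsTip k f t)
    (h' : IsTip k f t') : t = t' :=
  wordLE_antisymm (h'.2 t h.1) (h.2 t' h'.1)

theorem genLT_wrd {v : Mat n} (hv : v ∈ V n) {s s' : Fin n} (hss : s' < s) (j : Fin n) :
    genLT (v j s.rev) (v j s'.rev) := by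
  have hrev : s.rev < s'.rev := Fin.rev_lt_rev.mpr hss
  rcases hv with rfl | rfl | rfl | rfl <;>
    simp [uMat, mT, mS, mD, genStar, genLT, Prod.Lex.lt_iff, Fin.rev_rev, hss, hrev]

theorem isTip_brel {v : Mat n} (hv : v ∈ V n) (hn : 2 ≤ n) (j i : Fin n) :
    IsTip k (brel k v j i) (wrd v (fin1 n hn) j i) := by
  constructor
  · rw [brel_coeff hv]; exact one_ne_zero
  · intro w hw
    by_cases hw1 : w = 1
    · subst hw1
      exact Or.inr (Or.inl (by simp [wrd]))
    · obtain ⟨s, rfl⟩ : ∃ s, w = wrd v s j i := by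
        by_contra hc
        push_neg at hc
        exact hw (brel_apply_ne v j i hw1 hc)
      by_cases hs : s = fin1 n hn
      · exact Or.inl (by rw [hs])
      · refine Or.inr (Or.inr ⟨by simp [wrd], ?_⟩)
        have hlt : fin1 n hn < s := by
          rw [Fin.lt_def]
          have : s.val ≠ 0 := fun h => hs (Fin.ext (by simp [fin1, h]))
          simp [fin1]
          omega
        have hg := genLT_wrd hv hlt j
        simp only [wrd, FreeMonoid.toList_mul, FreeMonoid.toList_of, List.singleton_append]
        exact List.Lex.rel hg



theorem rev_fin1 (hn : 2 ≤ n) : (fin1 n hn).rev = finN n hn := by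
  ext
  simp [fin1, finN, Fin.rev]

theorem classify {v v' : Mat n} (hv : v ∈ V n) (hv' : v' ∈ V n) (hn : 2 ≤ n)
    {j i j' i' : Fin n}
    (h : wrd v (fin1 n hn) j i = wrd v' (fin1 n hn) j' i') :
    brel k v j i = brel k v' j' i' ∨
      (v' = mT v ∧ j = finN n hn ∧ i = finN n hn ∧ j' = finN n hn ∧ i' = finN n hn) := by
  rw [wrd_eq_iff] at h
  obtain ⟨h1, h2⟩ := h
  have h2 := genStar_inj h2
  rw [rev_fin1 hn] at h1 h2
  rcases hv with rfl | rfl | rfl | rfl <;> rcases hv' with rfl | rfl | rfl | rfl <;>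
    simp only [uMat, mT, mS, mD, genStar, Prod.mk.injEq, Fin.rev_inj, Bool.not_false,
      Bool.false_eq_true, Bool.true_eq_false, false_and, and_true, true_and,
      and_false] at h1 h2
  · rcases h1 with rfl; rcases h2 with rfl; exact Or.inl rfl
  · exact Or.inr ⟨rfl, h1.1, h2.1, h1.2.symm, h2.2.symm⟩
  · exact Or.inr ⟨rfl, h1.2, h2.2, h1.1.symm, h2.1.symm⟩
  · rcases h1 with rfl; rcases h2 with rfl; exact Or.inl rfl
  · rcases h1 with rfl; rcases h2 with rfl; exact Or.inl rfl
  · exact Or.inr ⟨rfl, h1.1, h2.1, h1.2.symm, h2.2.symm⟩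
  · exact Or.inr ⟨rfl, h1.2, h2.2, h1.1.symm, h2.1.symm⟩
  · rcases h1 with rfl; rcases h2 with rfl; exact Or.inl rfl



theorem wd_one : wd k (1 : Word n) = 1 := map_one (MonoidAlgebra.of k (Word n))

theorem wd_apply (w w' : Word n) : (wd k w).coeff w' = if w = w' then (1 : k) else 0 := by
  rw [wd, MonoidAlgebra.of_apply, MonoidAlgebra.coeff_single, Finsupp.single_apply]

/-- The one-step reduction replacing the single word `t` by `val`. -/
noncomputable def redMap (k : Type*) [Field k] {n : ℕ} (t : Word n) (val : FreeAlg k n) :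
    FreeAlg k n →ₗ[k] FreeAlg k n :=
  (Finsupp.lsum k fun w => LinearMap.toSpanSingleton k _ (if w = t then val else wd k w)) ∘ₗ
    (MonoidAlgebra.coeffLinearEquiv k).toLinearMap

theorem redMap_wd (t : Word n) (val : FreeAlg k n) (w : Word n) :
    redMap k t val (wd k w) = if w = t then val else wd k w := by
  rw [wd, MonoidAlgebra.of_apply, redMap, LinearMap.comp_apply, LinearEquiv.coe_coe,
    MonoidAlgebra.coeffLinearEquiv_apply, MonoidAlgebra.coeff_single]
  erw [Finsupp.lsum_single]
  rw [LinearMap.toSpanSingleton_apply, one_smul]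
  rw [wd, MonoidAlgebra.of_apply]

theorem redMap_fix (t : Word n) (val : FreeAlg k n) {x : FreeAlg k n} (hx : x.coeff t = 0) :
    redMap k t val x = x := by
  rw [redMap, LinearMap.comp_apply, LinearEquiv.coe_coe, MonoidAlgebra.coeffLinearEquiv_apply]
  erw [Finsupp.lsum_apply]
  have h1 : (x.coeff.sum fun w c => (LinearMap.toSpanSingleton k (FreeAlg k n)
      (if w = t then val else wd k w)) c) = x.coeff.sum fun w c => MonoidAlgebra.single w c := by
    apply Finsupp.sum_congr
    intro w hw
    have hwt : w ≠ t := fun h => (Finsupp.mem_support_iff.mp hw) (h ▸ hx)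
    rw [if_neg hwt, LinearMap.toSpanSingleton_apply, wd, MonoidAlgebra.of_apply,
      MonoidAlgebra.smul_single', mul_one]
  rw [h1, MonoidAlgebra.sum_coeff_single]

theorem isOneStep_redMap {f : FreeAlg k n} {t : Word n} (hf : f ≠ 0) (ht : IsTip k f t) :
    IsOneStep k f (redMap k t (wd k t - (f.coeff t)⁻¹ • f)) := by
  refine ⟨hf, 1, 1, t, ht, ?_, ?_⟩
  · rw [one_mul, mul_one, redMap_wd, if_pos rfl, wd_one, one_mul, mul_one]
  · intro w hw
    rw [one_mul, mul_one] at hw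
    rw [redMap_wd, if_neg hw]

/-- Iterated reduction by the relations `b^v_{r,r}`, `r` running through a list. -/
noncomputable def phiFam (k : Type*) [Field k] {n : ℕ} (hn : 2 ≤ n) (v : Mat n) :
    List (Fin n) → (FreeAlg k n →ₗ[k] FreeAlg k n)
  | [] => LinearMap.id
  | r :: rs => (redMap k (wrd v (fin1 n hn) r r)
      (wd k (wrd v (fin1 n hn) r r)
        - ((brel k v r r).coeff (wrd v (fin1 n hn) r r))⁻¹ • brel k v r r)) ∘ₗ phiFam k hn v rs

theorem isReduction_phiFam (hn : 2 ≤ n) {v : Mat n} (hv : v ∈ V n) (rs : List (Fin n)) :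
    IsReduction k (rels k n) (phiFam k hn v rs) := by
  induction rs with
  | nil => exact .id
  | cons r rs ih =>
      exact .comp ⟨v, hv, r, r, rfl⟩
        (isOneStep_redMap (brel_ne_zero hv r r) (isTip_brel hv hn r r)) ih

theorem phiFam_fix (hn : 2 ≤ n) (v : Mat n) (rs : List (Fin n)) {x : FreeAlg k n}
    (hx : ∀ r ∈ rs, x.coeff (wrd v (fin1 n hn) r r) = 0) : phiFam k hn v rs x = x := by
  induction rs with
  | nil => rfl
  | cons r rs ih =>
      rw [phiFam, LinearMap.comp_apply, ih (fun a ha => hx a (List.mem_cons_of_mem _ ha)),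
        redMap_fix _ _ (hx r List.mem_cons_self)]

theorem brel_coeff_ne {v : Mat n} (hv : v ∈ V n) (hn : 2 ≤ n) {r a : Fin n} (hra : r ≠ a) :
    (brel k v r r).coeff (wrd v (fin1 n hn) a a) = 0 := by
  apply brel_apply_ne _ _ _ (wrd_ne_one v _ a a)
  intro s h
  exact hra ((wrd_inj_s hv h).2.1).symm

theorem phiFam_tip {v : Mat n} (hv : v ∈ V n) (hn : 2 ≤ n) {rs : List (Fin n)}
    (hnd : rs.Nodup) {r : Fin n} (hr : r ∈ rs) :
    phiFam k hn v rs (wd k (wrd v (fin1 n hn) r r)) =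
      wd k (wrd v (fin1 n hn) r r)
        - ((brel k v r r).coeff (wrd v (fin1 n hn) r r))⁻¹ • brel k v r r := by
  induction rs with
  | nil => cases hr
  | cons a rs ih =>
      rw [phiFam, LinearMap.comp_apply]
      rcases List.mem_cons.mp hr with rfl | hr'
      · have hnotin : r ∉ rs := (List.nodup_cons.mp hnd).1
        rw [phiFam_fix hn v rs, redMap_wd, if_pos rfl]
        intro a ha
        have hra : r ≠ a := fun h => hnotin (h ▸ ha)
        rw [wd_apply, if_neg (fun h => hra (wrd_inj_s hv h).2.1)]
      · have hanr : a ≠ r := fun h => (List.nodup_cons.mp hnd).1 (h ▸ hr')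
        rw [ih (List.nodup_cons.mp hnd).2 hr']
        apply redMap_fix
        rw [MonoidAlgebra.coeff_sub, Finsupp.sub_apply, MonoidAlgebra.coeff_smul, Finsupp.smul_apply, wd_apply,
          if_neg (fun h => hanr ((wrd_inj_s hv h).2.1).symm),
          brel_coeff_ne hv hn (Ne.symm hanr)]
        simp

theorem L1 {v : Mat n} (hv : v ∈ V n) (hn : 2 ≤ n) (r : Fin n) :
    wd k (wrd v (fin1 n hn) r r)
        - ((brel k v r r).coeff (wrd v (fin1 n hn) r r))⁻¹ • brel k v r r
      = 1 - ∑ s ∈ Finset.univ.erase (fin1 n hn), wd k (wrd v s r r) := by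
  rw [brel_coeff hv, inv_one, one_smul, brel, if_pos rfl]
  have hsum : (∑ s : Fin n, wd k (wrd v s r r))
      = wd k (wrd v (fin1 n hn) r r)
        + ∑ s ∈ Finset.univ.erase (fin1 n hn), wd k (wrd v s r r) :=
    (Finset.add_sum_erase _ _ (Finset.mem_univ _)).symm
  simp only [wrd] at hsum ⊢
  rw [hsum]
  abel



theorem one_coeff_word (w : Word n) (hw : w ≠ 1) : (1 : FreeAlg k n).coeff w = 0 := by
  rw [MonoidAlgebra.one_def, MonoidAlgebra.coeff_single, Finsupp.single_apply, if_neg (fun h => hw h.symm)]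

theorem wrd_swap (hn : 2 ≤ n) (w : Mat n) (s : Fin n) :
    wrd w s (finN n hn) (finN n hn) = wrd (mT w) (fin1 n hn) s.rev s.rev := by
  rw [← rev_fin1 hn]
  exact wrd_mT w (fin1 n hn) s

theorem phiFam_main {v : Mat n} (hv : v ∈ V n) (hn : 2 ≤ n) (w : Mat n) (hw : mT w = v) :
    phiFam k hn v (List.finRange n)
        (1 - ∑ s ∈ Finset.univ.erase (fin1 n hn),
          wd k (wrd w s (finN n hn) (finN n hn)))
      = 1 - ∑ s ∈ Finset.univ.erase (fin1 n hn),
          (1 - ∑ s' ∈ Finset.univ.erase (fin1 n hn), wd k (wrd v s' s.rev s.rev)) := by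
  rw [map_sub, map_sum]
  congr 1
  · rw [← wd_one, phiFam_fix hn v _ (fun r _ => by
      rw [wd_apply, if_neg (fun h => wrd_ne_one v (fin1 n hn) r r h.symm)]), wd_one]
  · refine Finset.sum_congr rfl fun s _ => ?_
    have hword : wrd w s (finN n hn) (finN n hn) = wrd v (fin1 n hn) s.rev s.rev := by
      rw [wrd_swap hn w s, hw]
    rw [hword, phiFam_tip hv hn (List.nodup_finRange n) (List.mem_finRange _), L1 hv hn]

theorem sum_swap_eq (hn : 2 ≤ n) (v : Mat n) :
    (∑ s ∈ Finset.univ.erase (fin1 n hn),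
        (1 - ∑ s' ∈ Finset.univ.erase (fin1 n hn), wd k (wrd v s' s.rev s.rev)))
      = ∑ s ∈ Finset.univ.erase (fin1 n hn),
          (1 - ∑ s' ∈ Finset.univ.erase (fin1 n hn), wd k (wrd (mT v) s' s.rev s.rev)) := by
  simp only [Finset.sum_sub_distrib]
  congr 1
  rw [Finset.sum_comm]
  exact Finset.sum_congr rfl fun s _ => Finset.sum_congr rfl fun s' _ => by
    rw [wrd_mT v s' s]


end Aux
theorem statement_3 (k : Type*) [Field k] (n : ℕ) (hn : 2 ≤ n) :
    ∀ (g g' : FreeAlg k n) (w₁ w₂ : Word n),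
      IsInclusionAmbiguity k (rels k n) g g' w₁ w₂ →
      InclusionAmbiguityResolves k (rels k n) g g' w₁ w₂ := by
  rintro g g' w₁ w₂ ⟨hg, hg', hg0, hg'0, hne, t₀, t₀', ht₀, ht₀', heq⟩
  obtain ⟨v, hv, j, i, rfl⟩ := hg
  obtain ⟨v', hv', j', i', rfl⟩ := hg'
  have ht₀e : t₀ = wrd v (fin1 n hn) j i := isTip_unique ht₀ (isTip_brel hv hn j i)
  have ht₀'e : t₀' = wrd v' (fin1 n hn) j' i' := isTip_unique ht₀' (isTip_brel hv' hn j' i')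
  subst ht₀e ht₀'e
  -- lengths force `w₁ = w₂ = 1`
  have hl := congrArg (fun w : Word n => (FreeMonoid.toList w).length) heq
  simp only [wrd, FreeMonoid.toList_mul, FreeMonoid.toList_of, List.singleton_append,
    List.length_append, List.length_cons, List.length_nil] at hl
  have hw1 : w₁ = 1 := FreeMonoid.toList.injective (by
    have : FreeMonoid.toList w₁ = [] := List.eq_nil_of_length_eq_zero (by omega)
    simp [this])
  have hw2 : w₂ = 1 := FreeMonoid.toList.injective (by
    have : FreeMonoid.toList w₂ = [] := List.eq_nil_of_length_eq_zero (by omega)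
    simp [this])
  subst hw1 hw2
  rw [one_mul, mul_one] at heq
  rcases classify (k := k) hv hv' hn heq with he | ⟨rfl, rfl, rfl, rfl, rfl⟩
  · exact absurd he hne
  -- the genuine ambiguity: `g = b^v_{n,n}`, `g' = b^{vᵀ}_{n,n}`
  intro t t' htip htip'
  have ht : t = wrd v (fin1 n hn) (finN n hn) (finN n hn) :=
    isTip_unique htip (isTip_brel hv hn _ _)
  have ht' : t' = wrd (mT v) (fin1 n hn) (finN n hn) (finN n hn) :=
    isTip_unique htip' (isTip_brel (V_mT hv) hn _ _)
  subst ht ht'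
  refine ⟨phiFam k hn v (List.finRange n), phiFam k hn (mT v) (List.finRange n),
    isReduction_phiFam hn hv _, isReduction_phiFam hn (V_mT hv) _, ?_⟩
  rw [wd_one, one_mul, mul_one]
  rw [L1 (V_mT hv) hn (finN n hn), L1 hv hn (finN n hn)]
  rw [phiFam_main hv hn (mT v) (mT_mT v), phiFam_main (V_mT hv) hn v rfl]
  rw [sum_swap_eq hn v]
end UnPlusAnick
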